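/- Let p be an odd prime, λ a bar partition of n with p̄-weight w, and π a bar partition of n lying in D_n^- whose parts divisible by p correspond to the first component π^0 of its p̄-quotient. If Ψ(π) is the bar partition with the same p̄-quotient as π but p̄-core γ', then the p-adic valuations agree: v_p(π_1 ⋯ π_r) = v_p(π'_1 ⋯ π'_{r'}), where π = (π_1,…,π_r) and Ψ(π) = (π'_1,…,π'_{r'}). -/
import Mathlib


open scoped BigOperators

/-- `IsBarRemovalLeg q X Y l`: the bar partition `Y` is obtained from the bar partition `X`
(both encoded as finite sets of distinct positive parts) by removing a single `q`-bar of
leg length `l`: either decrease a part `a > q` to `a - q` (when `a - q` is not a part),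
with leg the number of parts strictly between `a - q` and `a`; or remove a part equal to
`q`, with leg the number of parts smaller than `q`; or remove two distinct parts
`a > b` with `a + b = q`, with leg `b` plus the number of parts strictly between `b`
and `a`. -/
def IsBarRemovalLeg (q : ℕ) (X Y : Finset ℕ) (l : ℕ) : Prop :=
  (∃ a ∈ X, q < a ∧ a - q ∉ X ∧ Y = insert (a - q) (X.erase a) ∧
    l = (X.filter (fun c => a - q < c ∧ c < a)).card) ∨
  (q ∈ X ∧ Y = X.erase q ∧ l = (X.filter (fun c => 0 < c ∧ c < q)).card) ∨
  (∃ a b, a ∈ X ∧ b ∈ X ∧ b < a ∧ a + b = q ∧ Y = (X.erase a).erase b ∧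
    l = b + (X.filter (fun c => b < c ∧ c < a)).card)

/-- `BarSeqL q X ls Y`: `Y` is obtained from `X` by successively removing `q`-bars whose
leg lengths are recorded in the list `ls`. -/
def BarSeqL (q : ℕ) : Finset ℕ → List ℕ → Finset ℕ → Prop
  | X, [], Y => Y = X
  | X, l :: ls, Y => ∃ Z, IsBarRemovalLeg q X Z l ∧ BarSeqL q Z ls Y

/-- `Y` is a `q̄`-core: no `q`-bar can be removed from it. -/
def IsBarCore (q : ℕ) (Y : Finset ℕ) : Prop := ∀ Z l, ¬ IsBarRemovalLeg q Y Z l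

/-- The partition (as a weakly decreasing function listing the parts) whose set of
(distinct) parts is `S`. -/
def partsOf (S : Finset ℕ) : ℕ → ℕ := fun i =>
  if i < S.card then (S.sort (· ≤ ·)).getD (S.card - 1 - i) 0 else 0

/-- The partition whose β-set is the finite set `X`. -/
def ofBeta (X : Finset ℕ) : ℕ → ℕ := fun i =>
  if i < X.card then (X.sort (· ≤ ·)).getD (X.card - 1 - i) 0 - (X.card - 1 - i) else 0

/-- The `i`-th component of the `p̄`-quotient of the bar partition `X`:
for `i = 0`, the bar partition whose parts are the parts of `X` divisible by `p`, divided
by `p`; for `1 ≤ i ≤ (p-1)/2`, the ordinary partition determined (via β-sets on the doubled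
runner) by the parts congruent to `i` and to `p - i` modulo `p`. -/
def barQuot (p : ℕ) (X : Finset ℕ) : ℕ → (ℕ → ℕ) := fun i =>
  if i = 0 then partsOf ((X.filter (fun a => p ∣ a)).image (fun a => a / p))
  else
    ofBeta ((((X.filter (fun a => a % p = i)).image
        (fun a => (X.sup id + X.card + 1) + a / p)) ∪
      (((Finset.range (p * (X.sup id + X.card + 1))).filter
          (fun b => b % p = (p - i) % p ∧ b ∉ X)).image
        (fun b => (X.sup id + X.card + 1) - 1 - b / p))))

/-- Two bar partitions have the same `p̄`-quotient. -/
def SameBarQuot (p : ℕ) (X X' : Finset ℕ) : Prop :=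
  ∀ i ≤ (p - 1) / 2, barQuot p X i = barQuot p X' i

lemma partsOf_ne_zero_iff {S : Finset ℕ} (h0 : 0 ∉ S) (i : ℕ) :
    partsOf S i ≠ 0 ↔ i < S.card := by
  unfold partsOf
  split_ifs with h
  · simp only [h, iff_true]
    set L := S.sort (· ≤ ·) with hL
    have hlen : L.length = S.card := Finset.length_sort _
    have hk : S.card - 1 - i < L.length := by omega
    rw [List.getD_eq_getElem L 0 hk]
    intro hz
    apply h0
    rw [← hz]
    exact (Finset.mem_sort _).mp (List.getElem_mem hk)
  · simp [h]

lemma partsOf_injOn {S S' : Finset ℕ} (h0 : 0 ∉ S) (h0' : 0 ∉ S')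
    (h : partsOf S = partsOf S') : S = S' := by
  have hcard : S.card = S'.card := by
    by_contra hne
    rcases Nat.lt_or_ge S.card S'.card with hlt | hge
    · have h1 := partsOf_ne_zero_iff h0 S.card
      have h2 := partsOf_ne_zero_iff h0' S.card
      rw [h] at h1
      omega
    · have hlt : S'.card < S.card := by omega
      have h1 := partsOf_ne_zero_iff h0 S'.card
      have h2 := partsOf_ne_zero_iff h0' S'.card
      rw [h] at h1
      omega
  set L := S.sort (· ≤ ·) with hLdef
  set L' := S'.sort (· ≤ ·) with hL'def
  have hlen : L.length = S.card := Finset.length_sort _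
  have hlen' : L'.length = S'.card := Finset.length_sort _
  have hLL : L = L' := by
    apply List.ext_getElem (by omega)
    intro k hk hk'
    have hi : S.card - 1 - k < S.card := by omega
    have hkey := congrFun h (S.card - 1 - k)
    unfold partsOf at hkey
    rw [if_pos hi, if_pos (by omega : S.card - 1 - k < S'.card)] at hkey
    have heq : S.card - 1 - (S.card - 1 - k) = k := by omega
    have heq' : S'.card - 1 - (S.card - 1 - k) = k := by omega
    rw [heq, ← hcard, heq] at hkey
    rw [List.getD_eq_getElem L 0 (by omega), List.getD_eq_getElem L' 0 (by omega)] at hkey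
    exact hkey
  ext a
  rw [← Finset.mem_sort (α := ℕ) (· ≤ ·), ← Finset.mem_sort (α := ℕ) (· ≤ ·),
    ← hLdef, ← hL'def, hLL]

lemma padicValNat_prod_eq_sum {p : ℕ} [Fact p.Prime] (X : Finset ℕ)
    (h : ∀ a ∈ X, a ≠ 0) :
    padicValNat p (∏ a ∈ X, a) = ∑ a ∈ X, padicValNat p a := by
  induction X using Finset.cons_induction with
  | empty => simp
  | cons a s ha ih =>
    rw [Finset.prod_cons, Finset.sum_cons,
      padicValNat.mul (h a (Finset.mem_cons_self a s))
        (Finset.prod_ne_zero_iff.mpr fun b hb => h b (Finset.mem_cons_of_mem hb)),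
      ih (fun b hb => h b (Finset.mem_cons_of_mem hb))]

lemma val_prod (p : ℕ) (hp : p.Prime) (X : Finset ℕ) (h0 : 0 ∉ X) :
    padicValNat p (∏ a ∈ X, a) =
      ((X.filter (fun a => p ∣ a)).image (fun a => a / p)).card +
        ∑ b ∈ (X.filter (fun a => p ∣ a)).image (fun a => a / p), padicValNat p b := by
  haveI : Fact p.Prime := ⟨hp⟩
  have hne : ∀ a ∈ X, a ≠ 0 := fun a ha h => h0 (h ▸ ha)
  rw [padicValNat_prod_eq_sum X hne]
  rw [← Finset.sum_filter_add_sum_filter_not X (fun a => p ∣ a)]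
  have hz : ∑ a ∈ X.filter (fun a => ¬ p ∣ a), padicValNat p a = 0 := by
    apply Finset.sum_eq_zero
    intro a ha
    rw [Finset.mem_filter] at ha
    exact padicValNat.eq_zero_of_not_dvd ha.2
  rw [hz, add_zero]
  have hinj : Set.InjOn (fun a => a / p) (X.filter (fun a => p ∣ a)) := by
    intro a ha b hb hab
    rw [Finset.coe_filter, Set.mem_setOf_eq] at ha hb
    have ha' := Nat.div_mul_cancel ha.2
    have hb' := Nat.div_mul_cancel hb.2
    dsimp only at hab
    rw [← ha', ← hb', hab]
  rw [Finset.sum_image (fun a ha b hb => hinj ha hb), Finset.card_image_of_injOn hinj,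
    Finset.card_eq_sum_ones, ← Finset.sum_add_distrib]
  apply Finset.sum_congr rfl
  intro a ha
  rw [Finset.mem_filter] at ha
  obtain ⟨c, rfl⟩ := ha.2
  have hc : c ≠ 0 := fun h => hne _ ha.1 (by simp [h])
  rw [Nat.mul_div_cancel_left c hp.pos,
    padicValNat.mul (Nat.Prime.ne_zero hp) hc, padicValNat.self hp.one_lt]

/-- Let `p` be an odd prime and `π = (π_1,…,π_r)` a bar partition of `n`
in `D_n⁻` (distinct parts, an odd number of which are even), whose parts divisible by `p`
are encoded in the first component of its `p̄`-quotient.  If `Ψ(π)` is a bar partition with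
the same `p̄`-quotient as `π` (but possibly a different `p̄`-core `γ'`), then
`v_p(π_1⋯π_r) = v_p(π'_1⋯π'_{r'})`. -/
theorem stmt_16 (p n : ℕ) (hp : p.Prime) (hpodd : Odd p)
    (X X' : Finset ℕ) (h0 : 0 ∉ X) (h0' : 0 ∉ X')
    (hn : ∑ a ∈ X, a = n)
    (hD : Odd ((X.filter (fun a => Even a)).card))
    (hquot : SameBarQuot p X X') :
    padicValNat p (∏ a ∈ X, a) = padicValNat p (∏ a ∈ X', a) := by
  have hq0 := hquot 0 (Nat.zero_le _)
  simp only [barQuot, if_pos rfl] at hq0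
  have hz : ∀ (Y : Finset ℕ), 0 ∉ Y →
      (0 : ℕ) ∉ (Y.filter (fun a => p ∣ a)).image (fun a => a / p) := by
    intro Y hY h
    rw [Finset.mem_image] at h
    obtain ⟨a, ha, hap⟩ := h
    rw [Finset.mem_filter] at ha
    obtain ⟨c, rfl⟩ := ha.2
    rw [Nat.mul_div_cancel_left c hp.pos] at hap
    subst hap
    exact hY (by simpa using ha.1)
  have hS : ((X.filter (fun a => p ∣ a)).image (fun a => a / p)) =
      ((X'.filter (fun a => p ∣ a)).image (fun a => a / p)) :=
    partsOf_injOn (hz X h0) (hz X' h0') hq0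
  rw [val_prod p hp X h0, val_prod p hp X' h0', hS]
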